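/- Fix l, h with h ≤ l and a correct key k* : Fin l → Bool. Then the number of pairs (i,k) of l-bit words such that exactly one of HD(i,k*) = h and HD(i,k) = h holds equals 2·C(l,h)·(2^l − C(l,h)); consequently the functional corruptibility of SFLL-HD, namely this count divided by 2^(2l), equals C(l,h)·(2^l − C(l,h))/2^(2l−1). -/

import Mathlib

/-- Hamming distance between `l`-bit words. -/
def HD {l : ℕ} (a b : Fin l → Bool) : ℕ :=
  (Finset.univ.filter (fun j => a j ≠ b j)).card

lemma HD_comm' {l : ℕ} (a b : Fin l → Bool) : HD a b = HD b a := by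
  unfold HD; congr 1; apply Finset.filter_congr; intro j _; simp [ne_comm]

lemma count_HD' {l : ℕ} (h : ℕ) (a : Fin l → Bool) :
    (Finset.univ.filter fun b : Fin l → Bool => HD a b = h).card = l.choose h := by
  have : l.choose h = (Finset.powersetCard h (Finset.univ : Finset (Fin l))).card := by
    rw [Finset.card_powersetCard, Finset.card_fin]
  rw [this]
  apply Finset.card_bij (fun b _ => Finset.univ.filter fun j => a j ≠ b j)
  · intro b hb
    simp only [Finset.mem_filter, Finset.mem_univ, true_and] at hb
    rw [Finset.mem_powersetCard]
    exact ⟨Finset.filter_subset _ _ |>.trans (by simp), hb⟩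
  · intro b _ b' _ heq
    funext j
    have := Finset.ext_iff.mp heq j
    simp only [Finset.mem_filter, Finset.mem_univ, true_and] at this
    revert this
    cases a j <;> cases b j <;> cases b' j <;> simp
  · intro s hs
    rw [Finset.mem_powersetCard] at hs
    refine ⟨fun j => if j ∈ s then !(a j) else a j, ?_, ?_⟩
    · have hfil : (Finset.univ.filter fun j => a j ≠ if j ∈ s then !(a j) else a j) = s := by
        ext j
        by_cases hj : j ∈ s <;> simp [hj]
      simp only [Finset.mem_filter, Finset.mem_univ, true_and]
      show (Finset.univ.filter fun j => a j ≠ if j ∈ s then !(a j) else a j).card = h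
      rw [hfil, hs.2]
    · ext j
      by_cases hj : j ∈ s <;> simp [hj]

/-- SFLL-HD functional corruptibility: the number of erring pairs `(i,k)` of `l`-bit
words equals `2·C(l,h)·(2^l − C(l,h))`, hence
`E_FC = C(l,h)·(2^l − C(l,h)) / 2^(2l−1)`. -/
theorem sfll_hd_functional_corruptibility {l : ℕ} (h : ℕ) (hh : h ≤ l)
    (kstar : Fin l → Bool) :
    ((Finset.univ.filter (fun p : (Fin l → Bool) × (Fin l → Bool) =>
        Xor (HD p.1 kstar = h) (HD p.1 p.2 = h))).card
      = 2 * l.choose h * (2 ^ l - l.choose h)) ∧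
    (((Finset.univ.filter (fun p : (Fin l → Bool) × (Fin l → Bool) =>
        Xor (HD p.1 kstar = h) (HD p.1 p.2 = h))).card : ℚ) / 2 ^ (2 * l)
      = (l.choose h : ℚ) * (2 ^ l - (l.choose h : ℚ)) / 2 ^ (2 * l - 1)) := by
  have hcardU : (Finset.univ : Finset (Fin l → Bool)).card = 2 ^ l := by
    simp [Fintype.card_fun]
  have hCle : l.choose h ≤ 2 ^ l := by
    rw [← count_HD' h kstar, ← hcardU]; exact Finset.card_filter_le _ _
  have hnot : ∀ a : Fin l → Bool,
      (Finset.univ.filter fun b : Fin l → Bool => ¬ (HD a b = h)).card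
        = 2 ^ l - l.choose h := by
    intro a
    rw [Finset.filter_not, Finset.card_sdiff_of_subset (Finset.filter_subset _ _), hcardU, count_HD']
  have hcount : ((Finset.univ.filter (fun p : (Fin l → Bool) × (Fin l → Bool) =>
        Xor (HD p.1 kstar = h) (HD p.1 p.2 = h))).card
      = 2 * l.choose h * (2 ^ l - l.choose h)) := by
    rw [Finset.card_filter]
    rw [← Finset.univ_product_univ, Finset.sum_product]
    have hinner : ∀ i : Fin l → Bool,
        (∑ k : Fin l → Bool, if Xor (HD i kstar = h) (HD i k = h) then 1 else 0)
          = if HD i kstar = h then 2 ^ l - l.choose h else l.choose h := by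
      intro i
      by_cases hA : HD i kstar = h
      · simp only [hA, if_true]
        rw [← hnot i, Finset.card_filter]
        congr 1; funext k; simp [Xor, hA]
      · simp only [hA, if_false]
        rw [← count_HD' h i, Finset.card_filter]
        congr 1; funext k; simp [Xor, hA]
    simp only [hinner]
    rw [Finset.sum_ite, Finset.sum_const, Finset.sum_const, smul_eq_mul, smul_eq_mul]
    have h1 : (Finset.univ.filter fun i : Fin l → Bool => HD i kstar = h).card
        = l.choose h := by
      rw [← count_HD' h kstar]; apply congrArg; apply Finset.filter_congr
      intro i _; rw [HD_comm']
    have h2 : (Finset.univ.filter fun i : Fin l → Bool => ¬ (HD i kstar = h)).card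
        = 2 ^ l - l.choose h := by
      rw [Finset.filter_not, Finset.card_sdiff_of_subset (Finset.filter_subset _ _), hcardU, h1]
    rw [h1, h2]
    ring
  refine ⟨hcount, ?_⟩
  rw [hcount]
  rw [Nat.cast_mul, Nat.cast_mul, Nat.cast_sub hCle]
  push_cast
  rcases Nat.eq_zero_or_pos l with hl | hl
  · subst hl
    have h0 : h = 0 := Nat.le_zero.mp hh
    subst h0
    norm_num
  · have hpow : (2 : ℚ) ^ (2 * l) = 2 * 2 ^ (2 * l - 1) := by
      rw [← pow_succ']
      congr 1
      omega
    rw [hpow]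
    have hne : (2 : ℚ) ^ (2 * l - 1) ≠ 0 := by positivity
    field_simp
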